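/- For any nonzero integer a and any positive integer n, E_{2n,a} ≡ a (mod 2), and E_{2n,a} ≡ a(1-2n) (mod 4). -/

import Mathlib

open Finset

def EZ (a : ℤ) : ℕ → ℤ
  | 0 => 1
  | n + 1 =>
      -a * ∑ k ∈ (Finset.Icc 1 ((n + 1) / 2)).attach,
        ((n + 1).choose (2 * k.1) : ℤ) * EZ a (n + 1 - 2 * k.1)
  decreasing_by
    have h := Finset.mem_Icc.mp k.2
    omega

theorem EZ_even (a : ℤ) (m : ℕ) (hm : 1 ≤ m) :
    EZ a (2 * m) = -a * ∑ k ∈ Finset.Icc 1 m, ((2*m).choose (2*k) : ℤ) * EZ a (2*(m-k)) := by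
  obtain ⟨j, rfl⟩ : ∃ j, m = j + 1 := ⟨m - 1, by omega⟩
  rw [show 2*(j+1) = (2*j+1)+1 by ring, EZ]
  rw [Finset.sum_attach (Finset.Icc 1 ((2*j+1+1)/2)) (fun k => ((2*j+1+1).choose (2*k) : ℤ) * EZ a (2*j+1+1 - 2*k))]
  have : (2*j+1+1)/2 = j+1 := by omega
  rw [this]
  congr 1
  apply Finset.sum_congr rfl
  intro k hk
  have hk' := Finset.mem_Icc.mp hk
  congr 2 <;> omega

theorem evensum' (m : ℕ) (hm : 1 ≤ m) :
    (∑ k ∈ Finset.range (m+1), ((2*m).choose (2*k) : ℤ)) = 2^(2*m-1) := by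
  have himg : (Finset.range (m+1)).image (fun k => 2*k) =
      (Finset.range (2*m+1)).filter (fun i => Even i) := by
    ext x
    simp only [Finset.mem_image, Finset.mem_filter, Finset.mem_range, Nat.even_iff]
    constructor
    · rintro ⟨k, hk, rfl⟩; omega
    · rintro ⟨h1, h2⟩; exact ⟨x/2, by omega, by omega⟩
  have hsplit := Finset.sum_filter_add_sum_filter_not (Finset.range (2*m+1))
    (fun i => Even i) (fun i => ((1 + (-1)^i) * ((2*m).choose i : ℤ)))
  have hodd : ∑ i ∈ (Finset.range (2*m+1)).filter (fun i => ¬ Even i),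
      ((1 + (-1)^i) * ((2*m).choose i : ℤ)) = 0 := by
    apply Finset.sum_eq_zero
    intro i hi
    have : Odd i := Nat.not_even_iff_odd.mp (Finset.mem_filter.mp hi).2
    rw [this.neg_one_pow]
    ring
  have heven : ∑ i ∈ (Finset.range (2*m+1)).filter (fun i => Even i),
      ((1 + (-1)^i) * ((2*m).choose i : ℤ)) =
      2 * ∑ k ∈ Finset.range (m+1), ((2*m).choose (2*k) : ℤ) := by
    rw [← himg, Finset.sum_image (by intro x _ y _ h; simp only at h; omega), Finset.mul_sum]
    apply Finset.sum_congr rfl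
    intro k _
    have : Even (2*k) := even_two_mul k
    rw [this.neg_one_pow]
    ring
  have htot : ∑ i ∈ Finset.range (2*m+1), ((1 + (-1)^i) * ((2*m).choose i : ℤ)) = 2^(2*m) := by
    have h1 : ∑ i ∈ Finset.range (2*m+1), (((2*m).choose i : ℤ)) = 2^(2*m) := by
      exact_mod_cast congrArg (Nat.cast : ℕ → ℤ) (Nat.sum_range_choose (2*m))
    have h2 : ∑ i ∈ Finset.range (2*m+1), ((-1)^i * ((2*m).choose i : ℤ)) = 0 :=
      Int.alternating_sum_range_choose_of_ne (by omega)
    calc ∑ i ∈ Finset.range (2*m+1), ((1 + (-1)^i) * ((2*m).choose i : ℤ))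
        = (∑ i ∈ Finset.range (2*m+1), (((2*m).choose i : ℤ)))
          + ∑ i ∈ Finset.range (2*m+1), ((-1)^i * ((2*m).choose i : ℤ)) := by
          rw [← Finset.sum_add_distrib]; apply Finset.sum_congr rfl; intros; ring
      _ = 2^(2*m) := by rw [h1, h2]; ring
  rw [hodd, add_zero, heven, htot] at hsplit
  have h4 : (2:ℤ)^(2*m) = 2 * 2^(2*m-1) := by
    rw [← pow_succ']; congr 1; omega
  rw [h4] at hsplit
  linarith

theorem Bval (m : ℕ) (hm : 2 ≤ m) :
    (∑ k ∈ Finset.Icc 1 (m-1), ((2*m).choose (2*k) : ℤ) * (1 - 2*(m:ℤ) + 2*k))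
      = (1 - (m:ℤ)) * (2^(2*m-1) - 2) := by
  have hrefl : (∑ k ∈ Finset.Icc 1 (m-1), ((2*m).choose (2*k) : ℤ) * (1 - 2*(m:ℤ) + 2*k))
      = ∑ k ∈ Finset.Icc 1 (m-1), ((2*m).choose (2*k) : ℤ) * (1 - 2*(k:ℤ)) := by
    apply Finset.sum_nbij' (fun k => m - k) (fun k => m - k)
    · intro k hk; have := Finset.mem_Icc.mp hk; rw [Finset.mem_Icc]; omega
    · intro k hk; have := Finset.mem_Icc.mp hk; rw [Finset.mem_Icc]; omega
    · intro k hk; have := Finset.mem_Icc.mp hk; omega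
    · intro k hk; have := Finset.mem_Icc.mp hk; omega
    · intro k hk
      have hk' := Finset.mem_Icc.mp hk
      have h1 : 2*(m-k) = 2*m - 2*k := by omega
      have h2 : (2*m).choose (2*m - 2*k) = (2*m).choose (2*k) :=
        Nat.choose_symm (by omega)
      rw [h1, h2]
      have h3 : ((m - k : ℕ) : ℤ) = (m:ℤ) - k := by
        push_cast [Nat.cast_sub (by omega : k ≤ m)]; ring
      rw [h3]
      ring
  have hsum : (∑ k ∈ Finset.Icc 1 (m-1), ((2*m).choose (2*k) : ℤ)) = 2^(2*m-1) - 2 := by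
    have e1 : (∑ k ∈ Finset.range (m+1), ((2*m).choose (2*k) : ℤ)) = 2^(2*m-1) :=
      evensum' m (by omega)
    have e2 : Finset.range (m+1) = insert 0 (insert m (Finset.Icc 1 (m-1))) := by
      ext x
      simp only [Finset.mem_range, Finset.mem_insert, Finset.mem_Icc]
      omega
    rw [e2] at e1
    rw [Finset.sum_insert (by simp only [Finset.mem_insert, Finset.mem_Icc]; omega),
        Finset.sum_insert (by rw [Finset.mem_Icc]; omega)] at e1
    simp only [Nat.mul_zero, Nat.choose_zero_right, Nat.choose_self, Nat.cast_one] at e1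
    linarith
  have h2B : 2 * (∑ k ∈ Finset.Icc 1 (m-1), ((2*m).choose (2*k) : ℤ) * (1 - 2*(m:ℤ) + 2*k))
      = (2 - 2*(m:ℤ)) * (2^(2*m-1) - 2) := by
    calc 2 * (∑ k ∈ Finset.Icc 1 (m-1), ((2*m).choose (2*k) : ℤ) * (1 - 2*(m:ℤ) + 2*k))
        = (∑ k ∈ Finset.Icc 1 (m-1), ((2*m).choose (2*k) : ℤ) * (1 - 2*(m:ℤ) + 2*k))
          + ∑ k ∈ Finset.Icc 1 (m-1), ((2*m).choose (2*k) : ℤ) * (1 - 2*(k:ℤ)) := by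
          rw [← hrefl]; ring
      _ = ∑ k ∈ Finset.Icc 1 (m-1), ((2*m).choose (2*k) : ℤ) * (2 - 2*(m:ℤ)) := by
          rw [← Finset.sum_add_distrib]; apply Finset.sum_congr rfl; intros; ring
      _ = (2 - 2*(m:ℤ)) * ∑ k ∈ Finset.Icc 1 (m-1), ((2*m).choose (2*k) : ℤ) := by
          rw [Finset.mul_sum]; apply Finset.sum_congr rfl; intros; ring
      _ = (2 - 2*(m:ℤ)) * (2^(2*m-1) - 2) := by rw [hsum]
  linarith

theorem h2a_lemma (a : ℤ) : (2 : ZMod 4) * (a : ZMod 4) * ((a : ZMod 4) - 1) = 0 := by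
  obtain ⟨t, ht⟩ := Int.even_mul_succ_self (a - 1)
  have h4 : 2*a*(a-1) = 4*t := by linear_combination 2*ht
  have : ((2*a*(a-1) : ℤ) : ZMod 4) = 0 := by
    rw [h4, Int.cast_mul, show ((4:ℤ):ZMod 4) = 0 from by decide, zero_mul]
  push_cast at this
  linear_combination this

theorem key (a : ℤ) : ∀ m : ℕ, 1 ≤ m →
    ((EZ a (2*m) : ℤ) : ZMod 4) = (a : ZMod 4) * (1 - 2*(m : ZMod 4)) := by
  intro m
  induction m using Nat.strong_induction_on with
  | _ m IH =>
    intro hm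
    obtain ⟨j, rfl⟩ : ∃ j, m = j + 1 := ⟨m - 1, by omega⟩
    rw [EZ_even a (j+1) (by omega)]
    rw [Finset.sum_Icc_succ_top (by omega : 1 ≤ j + 1)]
    have hc1 : ((2*(j+1)).choose (2*(j+1)) : ℤ) = 1 := by
      simp [Nat.choose_self]
    have hc0 : EZ a (2*((j+1)-(j+1))) = 1 := by
      simp [EZ]
    rw [hc1, hc0]
    rcases Nat.eq_zero_or_pos j with hj | hj
    · subst hj
      rw [show Finset.Icc 1 0 = (∅ : Finset ℕ) from by decide]
      push_cast
      simp
      ring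
    · -- j ≥ 1, so m = j+1 ≥ 2
      have hB := Bval (j+1) (by omega)
      simp only [Nat.add_sub_cancel] at hB
      have hB4 : (∑ k ∈ Finset.Icc 1 j, ((2*(j+1)).choose (2*k) : ZMod 4)
          * (1 - 2*((j:ZMod 4)+1) + 2*(k : ZMod 4))) = 2*((j:ZMod 4)+1) - 2 := by
        have := congrArg (fun x : ℤ => (x : ZMod 4)) hB
        push_cast at this
        rw [this]
        have hp : (2 : ZMod 4)^(2*(j+1)-1) = 0 := by
          rw [show 2*(j+1)-1 = (2*j-1)+2 by omega, pow_add,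
            show (2:ZMod 4)^2 = 0 from by decide, mul_zero]
        rw [hp]
        ring
      have hIH : ∀ k ∈ Finset.Icc 1 j,
          ((EZ a (2*((j+1)-k)) : ℤ) : ZMod 4)
            = (a : ZMod 4) * (1 - 2*(((j+1)-k : ℕ) : ZMod 4)) := by
        intro k hk
        have hk' := Finset.mem_Icc.mp hk
        exact IH ((j+1)-k) (by omega) (by omega)
      push_cast
      have hS : (∑ x ∈ Finset.Icc 1 j, ((2*(j+1)).choose (2*x) : ZMod 4)
          * ((EZ a (2*((j+1)-x)) : ℤ) : ZMod 4)) = (a : ZMod 4) * (2*((j:ZMod 4)+1) - 2) := by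
        calc (∑ x ∈ Finset.Icc 1 j, ((2*(j+1)).choose (2*x) : ZMod 4)
            * ((EZ a (2*((j+1)-x)) : ℤ) : ZMod 4))
            = ∑ x ∈ Finset.Icc 1 j, (a : ZMod 4) * (((2*(j+1)).choose (2*x) : ZMod 4)
              * (1 - 2*((j:ZMod 4)+1) + 2*(x : ZMod 4))) := by
              apply Finset.sum_congr rfl
              intro k hk
              have hk' := Finset.mem_Icc.mp hk
              rw [hIH k hk]
              have hcast : (((j+1)-k : ℕ) : ZMod 4) = ((j:ZMod 4)+1) - (k:ZMod 4) := by
                push_cast [Nat.cast_sub (by omega : k ≤ j+1)]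
                ring
              rw [hcast]
              ring
          _ = (a : ZMod 4) * ∑ x ∈ Finset.Icc 1 j, (((2*(j+1)).choose (2*x) : ZMod 4)
              * (1 - 2*((j:ZMod 4)+1) + 2*(x : ZMod 4))) := (Finset.mul_sum _ _ _).symm
          _ = (a : ZMod 4) * (2*((j:ZMod 4)+1) - 2) := by rw [hB4]
      rw [hS]
      linear_combination (-(j : ZMod 4)) * h2a_lemma a

theorem stmt15 (a : ℤ) (ha : a ≠ 0) (n : ℕ) (hn : 1 ≤ n) :
    EZ a (2 * n) ≡ a [ZMOD 2] ∧ EZ a (2 * n) ≡ a * (1 - 2 * n) [ZMOD 4] := by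
  have hkey := key a n hn
  have h4 : EZ a (2 * n) ≡ a * (1 - 2 * n) [ZMOD 4] := by
    have h := (ZMod.intCast_eq_intCast_iff (EZ a (2*n)) (a*(1-2*(n:ℤ))) 4).mp
      (by rw [hkey]; push_cast; ring)
    exact_mod_cast h
  refine ⟨?_, h4⟩
  have h2 : EZ a (2 * n) ≡ a * (1 - 2 * n) [ZMOD 2] := h4.of_dvd (by norm_num)
  have h2' : a * (1 - 2 * n) ≡ a [ZMOD 2] := by
    rw [Int.ModEq]
    have : a * (1 - 2 * n) - a = 2 * (-a * n) := by ring
    omega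
  exact h2.trans h2'
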